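/- Let m ≥ 1, let Ξ be a diagonal m×m matrix with real diagonal entries, let κ be a nonzero purely imaginary complex number, let M be a Hermitian m×m complex matrix, and let N be the Ξ-block part of M, i.e. N_{ij} = M_{ij} whenever Ξ_{ii} = Ξ_{jj} and N_{ij} = 0 otherwise. Then there exists a unique sequence (h_j)_{j≥0} of complex m×m matrices such that h₀ = I and, for every j ≥ 1, h_jΞ − Ξh_j = (κ(j−1)·I + M)·h_{j−1} − h_{j−1}·N. -/

import Mathlib

open Matrix BigOperators


namespace GCKZaux

variable {m : ℕ}

/-! ### The block projection `P` -/

noncomputable def P (ξ : Fin m → ℝ) (A : Matrix (Fin m) (Fin m) ℂ) :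
    Matrix (Fin m) (Fin m) ℂ :=
  Matrix.of fun i j => if ξ i = ξ j then A i j else 0

variable (ξ : Fin m → ℝ)

@[simp] lemma P_apply (A : Matrix (Fin m) (Fin m) ℂ) (i j : Fin m) :
    P ξ A i j = if ξ i = ξ j then A i j else 0 := rfl

lemma P_add (A B : Matrix (Fin m) (Fin m) ℂ) : P ξ (A + B) = P ξ A + P ξ B := by
  ext i j; by_cases h : ξ i = ξ j <;> simp [h]

lemma P_sub (A B : Matrix (Fin m) (Fin m) ℂ) : P ξ (A - B) = P ξ A - P ξ B := by
  ext i j; by_cases h : ξ i = ξ j <;> simp [h]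

lemma P_smul (c : ℂ) (A : Matrix (Fin m) (Fin m) ℂ) : P ξ (c • A) = c • P ξ A := by
  ext i j; by_cases h : ξ i = ξ j <;> simp [h]

lemma P_neg (A : Matrix (Fin m) (Fin m) ℂ) : P ξ (-A) = -(P ξ A) := by
  ext i j; by_cases h : ξ i = ξ j <;> simp [h]

lemma P_P (A : Matrix (Fin m) (Fin m) ℂ) : P ξ (P ξ A) = P ξ A := by
  ext i j; by_cases h : ξ i = ξ j <;> simp [h]

variable (M N : Matrix (Fin m) (Fin m) ℂ)

lemma P_mul_right (hNb : ∀ i j, ξ i ≠ ξ j → N i j = 0)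
    (A : Matrix (Fin m) (Fin m) ℂ) : P ξ (A * N) = P ξ A * N := by
  ext i j
  by_cases h : ξ i = ξ j
  · simp only [P_apply, if_pos h, Matrix.mul_apply]
    refine Finset.sum_congr rfl fun k _ => ?_
    by_cases hk : ξ i = ξ k
    · simp [hk]
    · rw [if_neg hk, zero_mul, hNb k j (fun hkj => hk (h ▸ hkj.symm ▸ rfl)), mul_zero]
  · simp only [P_apply, if_neg h, Matrix.mul_apply]
    symm
    refine Finset.sum_eq_zero fun k _ => ?_
    by_cases hk : ξ i = ξ k
    · rw [hNb k j (hk ▸ h), mul_zero]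
    · rw [if_neg hk, zero_mul]

lemma P_mul_left (hNb : ∀ i j, ξ i ≠ ξ j → N i j = 0)
    (A : Matrix (Fin m) (Fin m) ℂ) : P ξ (N * A) = N * P ξ A := by
  ext i j
  by_cases h : ξ i = ξ j
  · simp only [P_apply, if_pos h, Matrix.mul_apply]
    refine Finset.sum_congr rfl fun k _ => ?_
    by_cases hk : ξ k = ξ j
    · simp [hk]
    · rw [if_neg hk, mul_zero, hNb i k (fun hik => hk (hik ▸ h)), zero_mul]
  · simp only [P_apply, if_neg h, Matrix.mul_apply]
    symm
    refine Finset.sum_eq_zero fun k _ => ?_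
    by_cases hk : ξ k = ξ j
    · rw [hNb i k (fun hik => h (hik.trans hk)), zero_mul]
    · rw [if_neg hk, mul_zero]

lemma P_M_P (hMN : ∀ i j, ξ i = ξ j → N i j = M i j)
    (hNb : ∀ i j, ξ i ≠ ξ j → N i j = 0)
    (A : Matrix (Fin m) (Fin m) ℂ) : P ξ (M * P ξ A) = N * P ξ A := by
  ext i j
  by_cases h : ξ i = ξ j
  · simp only [P_apply, if_pos h, Matrix.mul_apply]
    refine Finset.sum_congr rfl fun k _ => ?_
    by_cases hk : ξ k = ξ j
    · rw [if_pos hk, hMN i k (hk ▸ h)]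
    · rw [if_neg hk, mul_zero, mul_zero]
  · simp only [P_apply, if_neg h, Matrix.mul_apply]
    symm
    refine Finset.sum_eq_zero fun k _ => ?_
    by_cases hk : ξ k = ξ j
    · rw [hNb i k (fun hik => h (hik.trans hk)), zero_mul]
    · rw [if_neg hk, mul_zero]

lemma P_M (hMN : ∀ i j, ξ i = ξ j → N i j = M i j)
    (hNb : ∀ i j, ξ i ≠ ξ j → N i j = 0) : P ξ M = N := by
  ext i j
  by_cases h : ξ i = ξ j
  · simp [h, (hMN i j h).symm]
  · simp [h, hNb i j h]

lemma P_N (hNb : ∀ i j, ξ i ≠ ξ j → N i j = 0) : P ξ N = N := by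
  ext i j
  by_cases h : ξ i = ξ j
  · simp [h]
  · simp [h, hNb i j h]

lemma P_comm (A : Matrix (Fin m) (Fin m) ℂ) :
    P ξ (A * Matrix.diagonal (fun i => (ξ i : ℂ)) -
      Matrix.diagonal (fun i => (ξ i : ℂ)) * A) = 0 := by
  ext i j
  by_cases h : ξ i = ξ j
  · have hc : (ξ i : ℂ) = ξ j := by exact_mod_cast h
    simp only [P_apply, if_pos h, Matrix.sub_apply, Matrix.mul_diagonal,
      Matrix.diagonal_mul, Matrix.zero_apply, hc]
    ring
  · simp [h]

lemma comm_zero_imp_P (A : Matrix (Fin m) (Fin m) ℂ)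
    (hA : A * Matrix.diagonal (fun i => (ξ i : ℂ)) -
      Matrix.diagonal (fun i => (ξ i : ℂ)) * A = 0) : P ξ A = A := by
  ext i j
  by_cases h : ξ i = ξ j
  · simp [h]
  · have hE := congrFun (congrFun hA i) j
    simp only [Matrix.sub_apply, Matrix.mul_diagonal, Matrix.diagonal_mul,
      Matrix.zero_apply] at hE
    have hd : ((ξ j : ℂ) - (ξ i : ℂ)) ≠ 0 := by
      rw [sub_ne_zero]
      intro he
      exact h (by exact_mod_cast he.symm)
    have : A i j * ((ξ j : ℂ) - (ξ i : ℂ)) = 0 := by rw [mul_sub]; linear_combination hE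
    have hz : A i j = 0 := by
      rcases mul_eq_zero.mp this with h' | h'
      · exact h'
      · exact absurd h' hd
    simp [h, hz]

/-! ### Trace lemmas and the Sylvester equation -/

lemma trace_im_zero_of_isHermitian {A : Matrix (Fin m) (Fin m) ℂ}
    (hA : A.IsHermitian) : (A.trace).im = 0 := by
  have : (starRingEnd ℂ) A.trace = A.trace := by
    rw [← Complex.star_def, ← Matrix.trace_conjTranspose, hA.eq]
  exact Complex.conj_eq_iff_im.mp this

lemma trace_mul_herm_im_zero {A B : Matrix (Fin m) (Fin m) ℂ}
    (hA : A.IsHermitian) (hB : B.IsHermitian) : ((A * B).trace).im = 0 := by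
  have : (starRingEnd ℂ) ((A * B).trace) = (A * B).trace := by
    rw [← Complex.star_def, ← Matrix.trace_conjTranspose, Matrix.conjTranspose_mul,
      hA.eq, hB.eq, Matrix.trace_mul_comm]
  exact Complex.conj_eq_iff_im.mp this

lemma trace_conjTranspose_mul_self (A : Matrix (Fin m) (Fin m) ℂ) :
    (Aᴴ * A).trace = ((∑ j, ∑ k, Complex.normSq (A k j) : ℝ) : ℂ) := by
  rw [Matrix.trace]
  push_cast
  refine Finset.sum_congr rfl fun j _ => ?_
  rw [Matrix.diag_apply, Matrix.mul_apply]
  refine Finset.sum_congr rfl fun k _ => ?_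
  rw [Matrix.conjTranspose_apply, Complex.star_def, mul_comm, Complex.mul_conj]

lemma sylv_inj (N : Matrix (Fin m) (Fin m) ℂ) (hNh : N.IsHermitian)
    (c : ℂ) (hre : c.re = 0) (hc : c ≠ 0)
    (A : Matrix (Fin m) (Fin m) ℂ) (h : c • A + N * A - A * N = 0) : A = 0 := by
  have key : c • A = A * N - N * A := by
    have h' : c • A + (N * A - A * N) = 0 := by rw [← add_sub_assoc]; exact h
    rw [add_eq_zero_iff_eq_neg] at h'
    rw [h', neg_sub]
  have htr := congrArg (fun B => (Aᴴ * B).trace) key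
  simp only [Matrix.mul_smul, Matrix.trace_smul, Matrix.mul_sub, Matrix.trace_sub] at htr
  have hAA : (Aᴴ * A).IsHermitian := Matrix.isHermitian_conjTranspose_mul_self A
  have h1 : ((Aᴴ * (A * N)).trace).im = 0 := by
    rw [← Matrix.mul_assoc]
    exact trace_mul_herm_im_zero hAA hNh
  have h2 : ((Aᴴ * (N * A)).trace).im = 0 := by
    have : (Aᴴ * (N * A)).IsHermitian := by
      unfold Matrix.IsHermitian
      rw [Matrix.conjTranspose_mul, Matrix.conjTranspose_mul, hNh.eq,
        Matrix.conjTranspose_conjTranspose, Matrix.mul_assoc]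
    exact trace_im_zero_of_isHermitian this
  set t : ℂ := (Aᴴ * A).trace with ht
  have htval : t = ((∑ j, ∑ k, Complex.normSq (A k j) : ℝ) : ℂ) :=
    trace_conjTranspose_mul_self A
  have him : (c • t).im = 0 := by
    rw [htr]
    simp [h1, h2]
  rw [smul_eq_mul, Complex.mul_im, htval] at him
  simp only [Complex.ofReal_im, Complex.ofReal_re, mul_zero, zero_add] at him
  have hcim : c.im ≠ 0 := fun h0 => hc (Complex.ext hre h0)
  have hsum : (∑ j, ∑ k, Complex.normSq (A k j) : ℝ) = 0 := by
    rcases mul_eq_zero.mp him with h' | h'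
    · exact absurd h' hcim
    · exact h'
  ext i j
  have hnn : ∀ j' ∈ Finset.univ, (0:ℝ) ≤ ∑ k, Complex.normSq (A k j') :=
    fun j' _ => Finset.sum_nonneg fun k _ => Complex.normSq_nonneg _
  have h3 := (Finset.sum_eq_zero_iff_of_nonneg hnn).mp hsum j (Finset.mem_univ j)
  have h4 := (Finset.sum_eq_zero_iff_of_nonneg
    (fun k _ => Complex.normSq_nonneg (A k j))).mp h3 i (Finset.mem_univ i)
  simpa using Complex.normSq_eq_zero.mp h4

noncomputable def sylvMap (N : Matrix (Fin m) (Fin m) ℂ) (c : ℂ) :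
    Matrix (Fin m) (Fin m) ℂ →ₗ[ℂ] Matrix (Fin m) (Fin m) ℂ :=
  c • LinearMap.id + LinearMap.mulLeft ℂ N - LinearMap.mulRight ℂ N

lemma sylvMap_apply (N : Matrix (Fin m) (Fin m) ℂ) (c : ℂ)
    (A : Matrix (Fin m) (Fin m) ℂ) :
    sylvMap N c A = c • A + N * A - A * N := rfl

lemma sylv_existsUnique (N : Matrix (Fin m) (Fin m) ℂ) (hNh : N.IsHermitian)
    (c : ℂ) (hre : c.re = 0) (hc : c ≠ 0) (B : Matrix (Fin m) (Fin m) ℂ) :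
    ∃! Y : Matrix (Fin m) (Fin m) ℂ, c • Y + N * Y - Y * N = B := by
  have hinj : Function.Injective (sylvMap N c) := by
    intro X Y hXY
    have h0 : sylvMap N c (X - Y) = 0 := by rw [map_sub, hXY, sub_self]
    have := sylv_inj N hNh c hre hc (X - Y) (by rw [← sylvMap_apply]; exact h0)
    exact sub_eq_zero.mp this
  have hsurj := LinearMap.injective_iff_surjective.mp hinj
  obtain ⟨Y, hY⟩ := hsurj B
  refine ⟨Y, ?_, fun Z hZ => hinj ?_⟩
  · show c • Y + N * Y - Y * N = B
    rw [← sylvMap_apply]; exact hY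
  · show sylvMap N c Z = sylvMap N c Y
    rw [sylvMap_apply, sylvMap_apply]
    simp only at hZ
    rw [hZ, ← hY, sylvMap_apply]

lemma c_re (κ : ℂ) (hκre : κ.re = 0) (j : ℕ) : (κ * ((j:ℂ)+1)).re = 0 := by
  rw [Complex.mul_re]
  simp [hκre]

lemma c_ne (κ : ℂ) (hκ : κ ≠ 0) (j : ℕ) : κ * ((j:ℂ)+1) ≠ 0 := by
  refine mul_ne_zero hκ ?_
  have : ((j:ℂ)+1) = ((j+1 : ℕ) : ℂ) := by push_cast; ring
  rw [this]
  exact Nat.cast_ne_zero.mpr (Nat.succ_ne_zero j)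

lemma sylv_existsUnique' (N : Matrix (Fin m) (Fin m) ℂ) (hNh : N.IsHermitian)
    (κ : ℂ) (hκre : κ.re = 0) (hκ : κ ≠ 0) (j : ℕ) (B : Matrix (Fin m) (Fin m) ℂ) :
    ∃! Y : Matrix (Fin m) (Fin m) ℂ, (κ * ((j:ℂ)+1)) • Y + N * Y - Y * N = B :=
  sylv_existsUnique N hNh _ (c_re κ hκre j) (c_ne κ hκ j) B

/-! ### The recursive construction -/

noncomputable def Kmat (κ : ℂ) (M : Matrix (Fin m) (Fin m) ℂ) (j : ℕ) :
    Matrix (Fin m) (Fin m) ℂ := (κ * (j:ℂ)) • 1 + M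

noncomputable def Rmat (κ : ℂ) (M N : Matrix (Fin m) (Fin m) ℂ) (j : ℕ)
    (A : Matrix (Fin m) (Fin m) ℂ) : Matrix (Fin m) (Fin m) ℂ :=
  Kmat κ M j * A - A * N

noncomputable def Xoff (ξ : Fin m → ℝ) (κ : ℂ) (M N : Matrix (Fin m) (Fin m) ℂ)
    (j : ℕ) (A : Matrix (Fin m) (Fin m) ℂ) : Matrix (Fin m) (Fin m) ℂ :=
  Matrix.of fun i i' => if ξ i = ξ i' then 0
    else Rmat κ M N j A i i' / ((ξ i' : ℂ) - (ξ i : ℂ))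

noncomputable def Yblk (ξ : Fin m → ℝ) (κ : ℂ) (M N : Matrix (Fin m) (Fin m) ℂ)
    (hNh : N.IsHermitian) (hκre : κ.re = 0) (hκ : κ ≠ 0)
    (j : ℕ) (A : Matrix (Fin m) (Fin m) ℂ) : Matrix (Fin m) (Fin m) ℂ :=
  Classical.choose (sylv_existsUnique' N hNh κ hκre hκ j (-(P ξ (M * Xoff ξ κ M N j A))))

lemma Yblk_spec (κ : ℂ) (hNh : N.IsHermitian) (hκre : κ.re = 0) (hκ : κ ≠ 0)
    (j : ℕ) (A : Matrix (Fin m) (Fin m) ℂ) :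
    (κ * ((j:ℂ)+1)) • Yblk ξ κ M N hNh hκre hκ j A
      + N * Yblk ξ κ M N hNh hκre hκ j A - Yblk ξ κ M N hNh hκre hκ j A * N
      = -(P ξ (M * Xoff ξ κ M N j A)) :=
  (Classical.choose_spec (sylv_existsUnique' N hNh κ hκre hκ j
    (-(P ξ (M * Xoff ξ κ M N j A))))).1

noncomputable def hseq (ξ : Fin m → ℝ) (κ : ℂ) (M N : Matrix (Fin m) (Fin m) ℂ)
    (hNh : N.IsHermitian) (hκre : κ.re = 0) (hκ : κ ≠ 0) :
    ℕ → Matrix (Fin m) (Fin m) ℂ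
  | 0 => 1
  | (j+1) => Xoff ξ κ M N j (hseq ξ κ M N hNh hκre hκ j)
      + Yblk ξ κ M N hNh hκre hκ j (hseq ξ κ M N hNh hκre hκ j)

lemma P_Xoff (κ : ℂ) (j : ℕ) (A : Matrix (Fin m) (Fin m) ℂ) :
    P ξ (Xoff ξ κ M N j A) = 0 := by
  ext i i'
  by_cases h : ξ i = ξ i' <;> simp [Xoff, h]

lemma Xoff_comm (κ : ℂ) (j : ℕ) (A : Matrix (Fin m) (Fin m) ℂ)
    (hPR : P ξ (Rmat κ M N j A) = 0) :
    Xoff ξ κ M N j A * Matrix.diagonal (fun i => (ξ i : ℂ))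
      - Matrix.diagonal (fun i => (ξ i : ℂ)) * Xoff ξ κ M N j A = Rmat κ M N j A := by
  ext i i'
  rw [Matrix.sub_apply, Matrix.mul_diagonal, Matrix.diagonal_mul]
  by_cases h : ξ i = ξ i'
  · have hR : Rmat κ M N j A i i' = 0 := by
      have := congrFun (congrFun hPR i) i'
      simpa [h] using this
    have hc : (ξ i : ℂ) = ξ i' := by exact_mod_cast h
    simp [Xoff, h, hR]
  · have hd : ((ξ i' : ℂ) - (ξ i : ℂ)) ≠ 0 := by
      rw [sub_ne_zero]
      intro he
      exact h (by exact_mod_cast he.symm)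
    simp only [Xoff, Matrix.of_apply, if_neg h]
    field_simp

lemma blk_comm (A : Matrix (Fin m) (Fin m) ℂ) (hPA : P ξ A = A) :
    A * Matrix.diagonal (fun i => (ξ i : ℂ))
      - Matrix.diagonal (fun i => (ξ i : ℂ)) * A = 0 := by
  ext i i'
  rw [Matrix.sub_apply, Matrix.mul_diagonal, Matrix.diagonal_mul, Matrix.zero_apply]
  by_cases h : ξ i = ξ i'
  · have hc : (ξ i : ℂ) = ξ i' := by exact_mod_cast h
    rw [hc]; ring
  · have hz : A i i' = 0 := by
      have := congrFun (congrFun hPA i) i'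
      simpa [h] using this.symm
    rw [hz]; ring

lemma P_Yblk (κ : ℂ) (hNh : N.IsHermitian) (hκre : κ.re = 0) (hκ : κ ≠ 0)
    (hNb : ∀ i j, ξ i ≠ ξ j → N i j = 0)
    (j : ℕ) (A : Matrix (Fin m) (Fin m) ℂ) :
    P ξ (Yblk ξ κ M N hNh hκre hκ j A) = Yblk ξ κ M N hNh hκre hκ j A := by
  set Y := Yblk ξ κ M N hNh hκre hκ j A with hY
  set B := -(P ξ (M * Xoff ξ κ M N j A)) with hB
  have spec : (κ * ((j:ℂ)+1)) • Y + N * Y - Y * N = B := Yblk_spec ξ M N κ hNh hκre hκ j A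
  have spec2 : (κ * ((j:ℂ)+1)) • (P ξ Y) + N * (P ξ Y) - (P ξ Y) * N = B := by
    have h' := congrArg (P ξ) spec
    rw [P_sub, P_add, P_smul, P_mul_left ξ N hNb, P_mul_right ξ N hNb] at h'
    rw [h', hB, P_neg, P_P]
  exact (sylv_existsUnique' N hNh κ hκre hκ j B).unique spec2 spec

lemma hseq_invariant (κ : ℂ) (hNh : N.IsHermitian) (hκre : κ.re = 0) (hκ : κ ≠ 0)
    (hMN : ∀ i j, ξ i = ξ j → N i j = M i j)
    (hNb : ∀ i j, ξ i ≠ ξ j → N i j = 0) :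
    ∀ j, P ξ (Rmat κ M N j (hseq ξ κ M N hNh hκre hκ j)) = 0 := by
  intro j
  induction j with
  | zero =>
    have h0 : Rmat κ M N 0 (hseq ξ κ M N hNh hκre hκ 0) = M - N := by
      show Rmat κ M N 0 1 = M - N
      simp [Rmat, Kmat]
    rw [h0, P_sub, P_M ξ M N hMN hNb, P_N ξ N hNb, sub_self]
  | succ j ih =>
    set X := Xoff ξ κ M N j (hseq ξ κ M N hNh hκre hκ j) with hXdef
    set Y := Yblk ξ κ M N hNh hκre hκ j (hseq ξ κ M N hNh hκre hκ j) with hYdef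
    have hstep : hseq ξ κ M N hNh hκre hκ (j+1) = X + Y := rfl
    set c : ℂ := κ * ((j:ℂ)+1) with hcdef
    have hcast : ((j+1:ℕ):ℂ) = (j:ℂ)+1 := by push_cast; ring
    have hexp : Rmat κ M N (j+1) (X + Y)
        = (c • X + c • Y + M * X + M * Y) - (X * N + Y * N) := by
      rw [Rmat, Kmat, hcast, ← hcdef]
      simp only [Matrix.add_mul, Matrix.mul_add, smul_mul_assoc, Matrix.one_mul, smul_add]
      abel
    have hPY : P ξ Y = Y := P_Yblk ξ M N κ hNh hκre hκ hNb j _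
    have hPX : P ξ X = 0 := P_Xoff ξ M N κ j _
    have hPMY : P ξ (M * Y) = N * Y := by
      conv_lhs => rw [← hPY]
      rw [P_M_P ξ M N hMN hNb, hPY]
    rw [hstep, hexp, P_sub, P_add, P_add, P_add, P_smul, P_smul, P_add,
      P_mul_right ξ N hNb, P_mul_right ξ N hNb, hPX, hPY, hPMY]
    have hs : c • Y + N * Y - Y * N = -(P ξ (M * X)) :=
      Yblk_spec ξ M N κ hNh hκre hκ j _
    have harr : c • (0 : Matrix (Fin m) (Fin m) ℂ) + c • Y + P ξ (M * X) + N * Y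
        - ((0 : Matrix (Fin m) (Fin m) ℂ) * N + Y * N)
        = (c • Y + N * Y - Y * N) + P ξ (M * X) := by
      rw [smul_zero, Matrix.zero_mul]
      abel
    rw [harr, hs, neg_add_cancel]

lemma hseq_equation (κ : ℂ) (hNh : N.IsHermitian) (hκre : κ.re = 0) (hκ : κ ≠ 0)
    (hMN : ∀ i j, ξ i = ξ j → N i j = M i j)
    (hNb : ∀ i j, ξ i ≠ ξ j → N i j = 0) (j : ℕ) :
    hseq ξ κ M N hNh hκre hκ (j+1) * Matrix.diagonal (fun i => (ξ i : ℂ))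
      - Matrix.diagonal (fun i => (ξ i : ℂ)) * hseq ξ κ M N hNh hκre hκ (j+1)
      = Rmat κ M N j (hseq ξ κ M N hNh hκre hκ j) := by
  set X := Xoff ξ κ M N j (hseq ξ κ M N hNh hκre hκ j) with hXdef
  set Y := Yblk ξ κ M N hNh hκre hκ j (hseq ξ κ M N hNh hκre hκ j) with hYdef
  have hstep : hseq ξ κ M N hNh hκre hκ (j+1) = X + Y := rfl
  set D := Matrix.diagonal (fun i => (ξ i : ℂ)) with hDdef
  have hX : X * D - D * X = Rmat κ M N j (hseq ξ κ M N hNh hκre hκ j) :=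
    Xoff_comm ξ M N κ j _ (hseq_invariant ξ M N κ hNh hκre hκ hMN hNb j)
  have hY : Y * D - D * Y = 0 :=
    blk_comm ξ Y (P_Yblk ξ M N κ hNh hκre hκ hNb j _)
  rw [hstep, Matrix.add_mul, Matrix.mul_add]
  have harr : X * D + Y * D - (D * X + D * Y) = (X * D - D * X) + (Y * D - D * Y) := by
    abel
  rw [harr, hX, hY, add_zero]

end GCKZaux

open GCKZaux

/-- Existence and uniqueness of the coefficients of the formal fundamental solution
`Ĥ(z) = 1 + h₁ z⁻¹ + h₂ z⁻² + ⋯` of the gcKZ ordinary differential equation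
`κ dF/dz = (Ξ + M/z) F`: for every `j ≥ 1`,
`h_j Ξ − Ξ h_j = (κ(j−1)·I + M)·h_{j−1} − h_{j−1}·N`,
where `Ξ` is real diagonal, `κ` is nonzero purely imaginary, `M` is Hermitian and
`N` is the `Ξ`-block part of `M`. -/
theorem formal_solution_recursion_existsUnique (m : ℕ) (hm : 1 ≤ m)
    (ξ : Fin m → ℝ) (Ξ : Matrix (Fin m) (Fin m) ℂ)
    (hΞ : Ξ = Matrix.diagonal fun i => (ξ i : ℂ))
    (κ : ℂ) (hκre : κ.re = 0) (hκ : κ ≠ 0)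
    (M : Matrix (Fin m) (Fin m) ℂ) (hM : M.IsHermitian)
    (N : Matrix (Fin m) (Fin m) ℂ)
    (hN : ∀ i j, (ξ i = ξ j → N i j = M i j) ∧ (ξ i ≠ ξ j → N i j = 0)) :
    ∃! h : ℕ → Matrix (Fin m) (Fin m) ℂ,
      h 0 = 1 ∧
      ∀ j : ℕ,
        h (j + 1) * Ξ - Ξ * h (j + 1)
          = ((κ * (j : ℂ)) • (1 : Matrix (Fin m) (Fin m) ℂ) + M) * h j - h j * N := by
  subst hΞ
  have hMN : ∀ i j, ξ i = ξ j → N i j = M i j := fun i j => (hN i j).1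
  have hNb : ∀ i j, ξ i ≠ ξ j → N i j = 0 := fun i j => (hN i j).2
  have hNh : N.IsHermitian := by
    ext i j
    rw [Matrix.conjTranspose_apply]
    by_cases h : ξ i = ξ j
    · rw [hMN j i h.symm, hMN i j h, ← Matrix.conjTranspose_apply, hM.eq]
    · rw [hNb j i (Ne.symm h), hNb i j h, star_zero]
  refine ⟨hseq ξ κ M N hNh hκre hκ, ⟨rfl, fun j => ?_⟩, ?_⟩
  · exact hseq_equation ξ M N κ hNh hκre hκ hMN hNb j
  · rintro g ⟨hg0, hgeq⟩
    have hgeq' : ∀ j : ℕ, g (j+1) * Matrix.diagonal (fun i => (ξ i : ℂ))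
        - Matrix.diagonal (fun i => (ξ i : ℂ)) * g (j+1)
        = Rmat κ M N j (g j) := fun j => hgeq j
    funext j
    induction j with
    | zero => rw [hg0]; rfl
    | succ j ihj =>
      set H := hseq ξ κ M N hNh hκre hκ with hH
      set Dg := Matrix.diagonal (fun i => (ξ i : ℂ)) with hDg
      set D := g (j+1) - H (j+1) with hDdef
      have e1 : g (j+1) * Dg - Dg * g (j+1) = H (j+1) * Dg - Dg * H (j+1) := by
        rw [hgeq' j, ihj, ← hseq_equation ξ M N κ hNh hκre hκ hMN hNb j]
      have hDcomm : D * Dg - Dg * D = 0 := by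
        have harr : D * Dg - Dg * D
            = (g (j+1) * Dg - Dg * g (j+1)) - (H (j+1) * Dg - Dg * H (j+1)) := by
          rw [hDdef]
          simp only [Matrix.sub_mul, Matrix.mul_sub]
          abel
        rw [harr, e1, sub_self]
      have hPD : P ξ D = D := comm_zero_imp_P ξ D hDcomm
      have h2g : P ξ (Rmat κ M N (j+1) (g (j+1))) = 0 := by
        rw [← hgeq' (j+1)]
        exact P_comm ξ _
      have h2H : P ξ (Rmat κ M N (j+1) (H (j+1))) = 0 :=
        hseq_invariant ξ M N κ hNh hκre hκ hMN hNb (j+1)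
      have hcast : ((j+1:ℕ):ℂ) = (j:ℂ)+1 := by push_cast; ring
      have hdiff : Rmat κ M N (j+1) (g (j+1)) - Rmat κ M N (j+1) (H (j+1))
          = (κ * ((j:ℂ)+1)) • D + M * D - D * N := by
        rw [hDdef]
        simp only [Rmat, Kmat, hcast, Matrix.mul_sub, Matrix.sub_mul, Matrix.add_mul,
          smul_mul_assoc, Matrix.one_mul, smul_sub]
        abel
      have hPdiff : P ξ ((κ * ((j:ℂ)+1)) • D + M * D - D * N) = 0 := by
        rw [← hdiff, P_sub, h2g, h2H, sub_self]
      have hPMD : P ξ (M * D) = N * D := by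
        conv_lhs => rw [← hPD]
        rw [P_M_P ξ M N hMN hNb, hPD]
      rw [P_sub, P_add, P_smul, P_mul_right ξ N hNb, hPMD, hPD] at hPdiff
      have hDz : D = 0 :=
        sylv_inj N hNh _ (c_re κ hκre j) (c_ne κ hκ j) D hPdiff
      exact sub_eq_zero.mp (hDdef ▸ hDz)
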